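/- Let (a1,...,ar) be a sequence of nonnegative integers obtained by a finite sequence of successful reductions applied to (1,2,...,r). Then for every k, either a_k = k or a_k ≥ a_{k+1} ≥ ... ≥ a_r. In particular, if a_k = 0 then a_{k+1} = 0. -/

import Mathlib

/-- One pass of the Reduction Algorithm with parameter `m`, acting on the last
`m` entries of the sequence, listed in reverse order (i.e. from `a_m` down to
`a_1`), with `Z` the set of still available reducers.  At each step the reducer
is `a` itself if `a < m` and `a ≤ max Z`, and otherwise `max Z`; the algorithm
fails (`none`) if the chosen reducer is no longer available. -/
def redAux (m : ℕ) : List ℕ → Finset ℕ → Option (List ℕ)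
  | [], _ => some []
  | a :: rest, Z =>
    let z := Z.max.getD 0
    let r := if a < m ∧ a ≤ z then a else z
    if r ∈ Z then
      (redAux m rest (Z.erase r)).map (fun cs => (a - r) :: cs)
    else
      none

/-- The Reduction Algorithm with parameter `m` applied to a sequence
`S = (b_1, …, b_k, a_1, …, a_m)`.  Returns `some` of the `m`-reduction
`(b_1, …, b_k, c_1, …, c_m)` if `S` is `m`-reducible, and `none` otherwise
(in particular if `S` is shorter than `m`). -/
def mReduction (m : ℕ) (S : List ℕ) : Option (List ℕ) :=
  if m ≤ S.length then
    (redAux m (S.drop (S.length - m)).reverse (Finset.Icc 1 m)).map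
      (fun cs => S.take (S.length - m) ++ cs.reverse)
  else
    none

/-- Remove the trailing zeros of a sequence (done before applying the next
reduction). -/
def removeTrailingZeros (L : List ℕ) : List ℕ :=
  (L.reverse.dropWhile (· = 0)).reverse

/-- Pad a sequence with zeros on the right to length `r`. -/
def padTo (r : ℕ) (L : List ℕ) : List ℕ :=
  L ++ List.replicate (r - L.length) 0

/-- `RedStar r S T` : the length-`r` sequence `T` (possibly with zero entries)
is obtained from `S` by a finite number of successful reductions, where before
each reduction the trailing zeros are removed, and after it the sequence is
padded with zeros back to length `r`. -/
inductive RedStar (r : ℕ) : List ℕ → List ℕ → Prop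
  | refl (S : List ℕ) : RedStar r S S
  | step (S T U : List ℕ) (m : ℕ) : RedStar r S T →
      mReduction m (removeTrailingZeros T) = some U → RedStar r S (padTo r U)

lemma mono_of_step (f : ℕ → ℕ) (k0 r : ℕ)
    (h : ∀ i, k0 ≤ i → i + 1 < r → f (i+1) ≤ f i) :
    ∀ i j, k0 ≤ i → i ≤ j → j < r → f j ≤ f i := by
  intro i j hki hij
  induction j, hij using Nat.le_induction with
  | base => intro _; exact le_refl _
  | succ j hj ih =>
    intro hjr
    exact le_trans (h j (le_trans hki hj) hjr) (ih (Nat.lt_of_succ_lt hjr))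

lemma mem_le_maxD {Z : Finset ℕ} {w : ℕ} (hw : w ∈ Z) : w ≤ Z.max.getD 0 := by
  rcases h : Z.max with _ | v
  · exact absurd (Finset.max_eq_bot.mp h ▸ hw) (Finset.notMem_empty w)
  · have h2 := Finset.le_max hw
    rw [h] at h2
    simp only [Option.getD_some]
    exact WithBot.coe_le_coe.mp h2

lemma max_erase_lt {Z : Finset ℕ} (h1 : 1 ≤ Z.max.getD 0) :
    (Z.erase (Z.max.getD 0)).max.getD 0 < Z.max.getD 0 := by
  set z := Z.max.getD 0 with hz
  rcases h : (Z.erase z).max with _ | w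
  · simp [h]; omega
  · have hw : w ∈ Z.erase z := Finset.mem_of_max h
    have h2 : w ≤ z := mem_le_maxD (Finset.mem_of_mem_erase hw)
    have hne : w ≠ z := Finset.ne_of_mem_erase hw
    simpa [h] using lt_of_le_of_ne h2 hne

lemma redAux_cons (m a : ℕ) (rest : List ℕ) (Z : Finset ℕ) :
    redAux m (a :: rest) Z =
      if (if a < m ∧ a ≤ Z.max.getD 0 then a else Z.max.getD 0) ∈ Z then
        (redAux m rest (Z.erase (if a < m ∧ a ≤ Z.max.getD 0 then a else Z.max.getD 0))).map
          (fun cs => (a - (if a < m ∧ a ≤ Z.max.getD 0 then a else Z.max.getD 0)) :: cs)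
      else none := rfl

lemma getD_replicate_zero (n k : ℕ) : (List.replicate n (0:ℕ)).getD k 0 = 0 := by
  by_cases h : k < n
  · rw [List.getD_eq_getElem _ _ (by simpa using h), List.getElem_replicate]
  · exact List.getD_eq_default _ _ (by simpa using not_lt.mp h)

lemma rtz_spec (L : List ℕ) :
    L = removeTrailingZeros L ++ List.replicate (L.length - (removeTrailingZeros L).length) 0 := by
  unfold removeTrailingZeros
  have hsplit := List.takeWhile_append_dropWhile (p := fun x => decide (x = 0)) (l := L.reverse)
  have hrep : List.takeWhile (fun x => decide (x = 0)) L.reverse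
      = List.replicate (List.takeWhile (fun x => decide (x = 0)) L.reverse).length 0 := by
    apply List.eq_replicate_of_mem
    intro b hb
    simpa using List.mem_takeWhile_imp hb
  have hlen : (List.takeWhile (fun x => decide (x = 0)) L.reverse).length
      = L.length - ((List.dropWhile (fun x => decide (x = 0)) L.reverse).reverse).length := by
    have h3 := congrArg List.length hsplit
    rw [List.length_append, List.length_reverse] at h3
    rw [List.length_reverse]
    omega
  conv_lhs => rw [← L.reverse_reverse, ← hsplit]
  rw [List.reverse_append, hrep, List.reverse_replicate, hlen]

lemma rtz_getD (L : List ℕ) (k : ℕ) : (removeTrailingZeros L).getD k 0 = L.getD k 0 := by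
  conv_rhs => rw [rtz_spec L]
  by_cases h : k < (removeTrailingZeros L).length
  · rw [List.getD_append _ _ _ _ h]
  · rw [List.getD_append_right _ _ _ _ (not_lt.mp h), List.getD_eq_default _ _ (not_lt.mp h),
      getD_replicate_zero]

lemma rtz_length_le (L : List ℕ) : (removeTrailingZeros L).length ≤ L.length := by
  have := congrArg List.length (rtz_spec L)
  simp at this
  omega

lemma padTo_getD (r : ℕ) (L : List ℕ) (k : ℕ) : (padTo r L).getD k 0 = L.getD k 0 := by
  unfold padTo
  by_cases h : k < L.length
  · rw [List.getD_append _ _ _ _ h]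
  · rw [List.getD_append_right _ _ _ _ (not_lt.mp h), List.getD_eq_default _ _ (not_lt.mp h),
      getD_replicate_zero]

lemma padTo_length {r : ℕ} {L : List ℕ} (h : L.length ≤ r) : (padTo r L).length = r := by
  simp [padTo]; omega

lemma getD_reverse {l : List ℕ} {k : ℕ} (h : k < l.length) :
    l.reverse.getD k 0 = l.getD (l.length - 1 - k) 0 := by
  rw [List.getD_eq_getElem _ _ (by simpa using h), List.getElem_reverse,
    List.getD_eq_getElem _ _ (by omega)]

lemma redAux_spec (m : ℕ) : ∀ (L : List ℕ) (Z : Finset ℕ) (C : List ℕ),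
    redAux m L Z = some C → Z ⊆ Finset.Icc 1 m →
    List.Chain' (fun a b => a ≤ b + 1) L →
    C.length = L.length ∧ List.Chain' (fun a b => a ≤ b) C ∧
      ∀ t, t < L.length → C.getD t 0 ≤ L.getD t 0 - 1 := by
  intro L
  induction L with
  | nil =>
    intro Z C hC _ _
    simp [redAux] at hC
    subst hC
    simp; exact List.isChain_nil
  | cons a rest IH =>
    intro Z C hC hZ hch
    rw [redAux_cons] at hC
    set z := Z.max.getD 0 with hzdef
    set ρ := if a < m ∧ a ≤ z then a else z with hρdef
    by_cases hρZ : ρ ∈ Z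
    swap
    · rw [if_neg hρZ] at hC; exact absurd hC (by simp)
    rw [if_pos hρZ] at hC
    rw [Option.map_eq_some_iff] at hC
    obtain ⟨cs, hcs, hCeq⟩ := hC
    subst hCeq
    have hρ1 : 1 ≤ ρ := (Finset.mem_Icc.mp (hZ hρZ)).1
    have hρm : ρ ≤ m := (Finset.mem_Icc.mp (hZ hρZ)).2
    have hchrest : List.Chain' (fun a b => a ≤ b + 1) rest := List.isChain_of_isChain_cons hch
    obtain ⟨hlen, hchain, hpt⟩ := IH (Z.erase ρ) cs hcs
      (Finset.Subset.trans (Finset.erase_subset ρ Z) hZ) hchrest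
    refine ⟨by simp [hlen], ?_, ?_⟩
    · -- Chain'
      cases rest with
      | nil =>
        have : cs = [] := List.length_eq_zero_iff.mp (by simpa using hlen)
        subst this
        exact List.isChain_singleton _
      | cons b rest2 =>
        rw [redAux_cons] at hcs
        set z2 := (Z.erase ρ).max.getD 0 with hz2def
        set ρ2 := if b < m ∧ b ≤ z2 then b else z2 with hρ2def
        by_cases hρ2Z : ρ2 ∈ Z.erase ρ
        swap
        · rw [if_neg hρ2Z] at hcs; exact absurd hcs (by simp)
        rw [if_pos hρ2Z] at hcs
        rw [Option.map_eq_some_iff] at hcs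
        obtain ⟨cs2, _, hcseq⟩ := hcs
        subst hcseq
        apply List.isChain_cons_cons.mpr
        refine ⟨?_, hchain⟩
        -- key inequality : a - ρ ≤ b - ρ2
        have hab : a ≤ b + 1 := (List.isChain_cons_cons.mp hch).1
        by_cases hs : a < m ∧ a ≤ z
        · rw [hρdef, if_pos hs]
          simp
        · -- ρ = z, max step
          have hρz : ρ = z := by rw [hρdef, if_neg hs]
          have hz1 : 1 ≤ z := hρz ▸ hρ1
          have hz2lt : z2 < z := by
            rw [hz2def, ← hρz]
            rw [hρz] at hρ1 ⊢
            exact max_erase_lt hρ1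
          by_cases hs2 : b < m ∧ b ≤ z2
          · -- self step for b : output 0, and a ≤ z so a - ρ = 0
            have haz : a ≤ z := by omega
            have : a - ρ = 0 := by rw [hρz]; omega
            rw [this, hρ2def, if_pos hs2]
            simp
          · have hρ2z2 : ρ2 = z2 := by rw [hρ2def, if_neg hs2]
            rw [hρz, hρ2z2]
            omega
    · -- pointwise
      intro t ht
      cases t with
      | zero =>
        simp only [List.getD_cons_zero]
        omega
      | succ t =>
        simp only [List.getD_cons_succ]
        exact hpt t (by simpa using ht)

def RedInv (r : ℕ) (A : List ℕ) : Prop :=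
  A.length = r ∧ ∃ k0, k0 ≤ r ∧
    (∀ k, k < k0 → A.getD k 0 = k + 1) ∧
    (∀ i, k0 ≤ i → i + 1 < r → A.getD (i+1) 0 ≤ A.getD i 0) ∧
    (∀ i, k0 ≤ i → i < r → A.getD i 0 ≤ k0)

lemma inv_step {r m : ℕ} {T U : List ℕ} (hT : RedInv r T)
    (hred : mReduction m (removeTrailingZeros T) = some U) : RedInv r (padTo r U) := by
  obtain ⟨hTlen, k0, hk0r, hid, hstep, hbd⟩ := hT
  have hmono : ∀ i j, k0 ≤ i → i ≤ j → j < r → T.getD j 0 ≤ T.getD i 0 :=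
    mono_of_step _ k0 r hstep
  set T' := removeTrailingZeros T with hT'def
  have hT'getD : ∀ k, T'.getD k 0 = T.getD k 0 := fun k => rtz_getD T k
  unfold mReduction at hred
  set n := T'.length with hndef
  have hnr : n ≤ r := hTlen ▸ rtz_length_le T
  by_cases hm : m ≤ n
  swap
  · rw [if_neg hm] at hred; exact absurd hred (by simp)
  rw [if_pos hm, Option.map_eq_some_iff] at hred
  obtain ⟨cs, hcs, hUeq⟩ := hred
  set p := n - m with hpdef
  have hEl : (T'.drop p).length = m := by rw [List.length_drop]; omega
  have hEget : ∀ t, t < m → (T'.drop p).getD t 0 = T.getD (p+t) 0 := by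
    intro t ht
    rw [List.getD_eq_getElem _ _ (by omega : t < (T'.drop p).length), List.getElem_drop,
      ← hT'getD, List.getD_eq_getElem _ _ (by omega : p + t < n)]
  have hstepT' : ∀ i, p ≤ i → i + 1 < n → T.getD (i+1) 0 ≤ T.getD i 0 + 1 := by
    intro i hpi hin
    rcases lt_trichotomy (i+1) k0 with h|h|h
    · rw [hid (i+1) h, hid i (by omega)]
    · rw [hid i (by omega)]
      have := hbd (i+1) (by omega) (by omega)
      omega
    · have := hstep i (by omega) (by omega)
      omega
  have hchainL : List.Chain' (fun a b => a ≤ b + 1) (T'.drop p).reverse := by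
    refine List.isChain_reverse.mpr (List.isChain_iff_getElem.mpr ?_)
    intro i hi
    show (T'.drop p).get ⟨i+1, by omega⟩ ≤ (T'.drop p).get ⟨i, by omega⟩ + 1
    have h1 : i + 1 < m := by omega
    simp only [List.get_eq_getElem]
    rw [← List.getD_eq_getElem (T'.drop p) 0 (by omega : i + 1 < (T'.drop p).length),
      ← List.getD_eq_getElem (T'.drop p) 0 (by omega : i < (T'.drop p).length),
      hEget (i+1) h1, hEget i (by omega), show p + (i+1) = (p+i) + 1 by omega]
    exact hstepT' (p+i) (by omega) (by omega)
  obtain ⟨hcslen, hcschain, hcspt⟩ := redAux_spec m ((T'.drop p).reverse) (Finset.Icc 1 m) cs hcs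
    (Finset.Subset.refl _) hchainL
  have hcslen' : cs.length = m := by rw [hcslen, List.length_reverse, hEl]
  have hUlen : U.length = n := by
    rw [← hUeq, List.length_append, List.length_take, List.length_reverse, hcslen']
    omega
  have htplen : (T'.take p).length = p := by rw [List.length_take]; omega
  have hAgetD : ∀ k, (padTo r U).getD k 0 = U.getD k 0 := padTo_getD r U
  have hAlen : (padTo r U).length = r := padTo_length (hUlen ▸ hnr)
  have hA1 : ∀ k, k < p → (padTo r U).getD k 0 = T.getD k 0 := by
    intro k hk
    rw [hAgetD, ← hUeq, List.getD_append _ _ _ _ (by omega : k < (T'.take p).length),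
      List.getD_eq_getElem _ _ (by omega : k < (T'.take p).length), List.getElem_take,
      ← hT'getD, List.getD_eq_getElem _ _ (by omega : k < n)]
  have hA2 : ∀ t, t < m → (padTo r U).getD (p+t) 0 = (cs.reverse).getD t 0 := by
    intro t ht
    rw [hAgetD, ← hUeq, List.getD_append_right _ _ _ _ (by omega : (T'.take p).length ≤ p + t),
      htplen, show p + t - p = t by omega]
  have hA3 : ∀ k, n ≤ k → (padTo r U).getD k 0 = 0 := by
    intro k hk
    rw [hAgetD]
    exact List.getD_eq_default _ _ (by omega : U.length ≤ k)
  have hD : ∀ t, t + 1 < m → (cs.reverse).getD (t+1) 0 ≤ (cs.reverse).getD t 0 := by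
    have hch : List.Chain' (fun a b : ℕ => b ≤ a) cs.reverse := List.isChain_reverse.mpr hcschain
    replace hch := List.isChain_iff_getElem.mp hch
    intro t ht
    have := hch t (by simp; omega)
    rwa [← List.getD_eq_getElem (cs.reverse) 0 (by simp; omega),
      ← List.getD_eq_getElem (cs.reverse) 0 (by simp; omega)] at this
  have hDpt : ∀ t, t < m → (cs.reverse).getD t 0 ≤ T.getD (p+t) 0 - 1 := by
    intro t ht
    rw [getD_reverse (by omega : t < cs.length), hcslen']
    have h1 := hcspt (m - 1 - t) (by simp [hEl]; omega)
    rw [getD_reverse (by omega : m - 1 - t < (T'.drop p).length), hEl,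
      show m - 1 - (m - 1 - t) = t by omega, hEget t ht] at h1
    exact h1
  have hident : ∀ k, k < min k0 p → (padTo r U).getD k 0 = k + 1 := by
    intro k hk
    rw [hA1 k (by omega)]
    exact hid k (by omega)
  have hTple : 0 < m → T.getD p 0 ≤ p + 1 := by
    intro hm0
    rcases lt_or_ge p k0 with h5|h5
    · rw [hid p h5]
    · have := hbd p h5 (by omega)
      omega
  have hstepA : ∀ i, min k0 p ≤ i → i + 1 < r → (padTo r U).getD (i+1) 0 ≤ (padTo r U).getD i 0 := by
    intro i hi hir
    by_cases h1 : n ≤ i + 1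
    · rw [hA3 _ h1]; exact Nat.zero_le _
    push_neg at h1
    by_cases h2 : i + 1 < p
    · rw [hA1 (i+1) h2, hA1 i (by omega)]
      exact hstep i (by omega) hir
    push_neg at h2
    rcases eq_or_lt_of_le h2 with h3|h3
    · have hm1 : 0 < m := by omega
      have hApD : (padTo r U).getD (i+1) 0 = (cs.reverse).getD 0 0 := by
        have := hA2 0 hm1
        rwa [Nat.add_zero, h3] at this
      have hD0 : (cs.reverse).getD 0 0 ≤ T.getD p 0 - 1 := by
        have := hDpt 0 hm1
        rwa [Nat.add_zero] at this
      rw [hApD, hA1 i (by omega)]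
      rcases le_or_gt k0 i with h4|h4
      · have hTpi : T.getD p 0 ≤ T.getD i 0 := hmono i p h4 (by omega) (by omega)
        omega
      · have hTi : T.getD i 0 = i + 1 := hid i h4
        have hTp := hTple hm1
        omega
    · have ht : i - p + 1 < m := by omega
      have e1 : (padTo r U).getD (i+1) 0 = (cs.reverse).getD (i-p+1) 0 := by
        have := hA2 (i-p+1) ht
        rwa [show p + (i-p+1) = i+1 by omega] at this
      have e2 : (padTo r U).getD i 0 = (cs.reverse).getD (i-p) 0 := by
        have := hA2 (i-p) (by omega)
        rwa [show p + (i-p) = i by omega] at this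
      rw [e1, e2]
      exact hD (i-p) ht
  have hbound : ∀ i, min k0 p ≤ i → i < r → (padTo r U).getD i 0 ≤ min k0 p := by
    have hA0 : (padTo r U).getD (min k0 p) 0 ≤ min k0 p := by
      rcases lt_or_ge k0 p with h|h
      · rw [min_eq_left (le_of_lt h), hA1 k0 h]
        exact hbd k0 le_rfl (by omega)
      · rw [min_eq_right h]
        by_cases hm0 : 0 < m
        · have e := hA2 0 hm0
          rw [Nat.add_zero] at e
          rw [e]
          have hD0 := hDpt 0 hm0
          rw [Nat.add_zero] at hD0
          have := hTple hm0
          omega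
        · rw [hA3 p (by omega)]
          exact Nat.zero_le _
    intro i hi hir
    exact le_trans
      (mono_of_step (fun k => (padTo r U).getD k 0) (min k0 p) r hstepA (min k0 p) i le_rfl hi hir)
      hA0
  exact ⟨hAlen, min k0 p, by omega, hident, hstepA, hbound⟩

lemma redstar_inv {r : ℕ} {A : List ℕ} (h : RedStar r (List.range' 1 r) A) : RedInv r A := by
  induction h with
  | refl =>
    refine ⟨by simp, r, le_rfl, ?_, ?_, ?_⟩
    · intro k hk
      rw [List.getD_eq_getElem _ _ (by simpa using hk), List.getElem_range']
      omega
    · intro i hi hir; omega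
    · intro i hi hir; omega
  | step S T U m hred ih => exact inv_step ih hred

/-- Corollary 2.8 (cor:reddown): let `A` be obtained from `(1, 2, …, r)` by a
finite sequence of successful reductions.  Then for every position `k`
(0-indexed, so the original entry is `k+1`), either `A[k] = k + 1` or
`A[k] ≥ A[k+1] ≥ … ≥ A[r-1]`; in particular if `A[k] = 0` then `A[k+1] = 0`. -/
theorem reddown_star (r : ℕ) (A : List ℕ)
    (h : RedStar r (List.range' 1 r) A) (k : ℕ) (hk : k < r) :
    (A.getD k 0 = k + 1 ∨
      ∀ i j : ℕ, k ≤ i → i ≤ j → j < r → A.getD j 0 ≤ A.getD i 0) ∧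
    (A.getD k 0 = 0 → A.getD (k + 1) 0 = 0) := by
  obtain ⟨hlen, k0, hk0r, hid, hstep, hbd⟩ := redstar_inv h
  have hmono := mono_of_step (fun j => A.getD j 0) k0 r hstep
  by_cases hkk : k < k0
  · refine ⟨Or.inl (hid k hkk), ?_⟩
    intro h0
    rw [hid k hkk] at h0
    omega
  · push_neg at hkk
    refine ⟨Or.inr fun i j hki hij hjr => hmono i j (le_trans hkk hki) hij hjr, ?_⟩
    intro h0
    by_cases hk1 : k + 1 < r
    · have := hstep k hkk hk1
      omega
    · exact List.getD_eq_default _ _ (by omega)
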